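/- Let H be a complex Hilbert space and let P, Q be orthogonal projections on H with ‖P − Q‖ < 1. Then the Kato–Nagy operator W := (I − (P − Q)²)^{-1/2} (PQ + (I − P)(I − Q)) is a well-defined unitary operator satisfying W Q W⁻¹ = P. -/

import Mathlib

set_option synthInstance.maxHeartbeats 1000000
set_option maxHeartbeats 1000000

section KNaux

variable {R : Type*} [Ring R]

lemma kn_aux1 {P Q : R} (hP : P*P = P) (hQ : Q*Q = Q) :
    (Q*P + (1-Q)*(1-P)) * (P*Q + (1-P)*(1-Q)) = 1 - (P-Q)^2 := by
  have hP' : ∀ x : R, P*(P*x) = P*x := fun x => by rw [← mul_assoc, hP]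
  have hQ' : ∀ x : R, Q*(Q*x) = Q*x := fun x => by rw [← mul_assoc, hQ]
  simp only [mul_sub, sub_mul, mul_add, add_mul, mul_one, one_mul, mul_assoc, hP, hQ, hP', hQ']
  noncomm_ring [hP, hQ, hP', hQ']

lemma kn_aux2 {P Q : R} (hP : P*P = P) (hQ : Q*Q = Q) :
    (P*Q + (1-P)*(1-Q)) * (Q*P + (1-Q)*(1-P)) = 1 - (P-Q)^2 := by
  have hP' : ∀ x : R, P*(P*x) = P*x := fun x => by rw [← mul_assoc, hP]
  have hQ' : ∀ x : R, Q*(Q*x) = Q*x := fun x => by rw [← mul_assoc, hQ]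
  simp only [mul_sub, sub_mul, mul_add, add_mul, mul_one, one_mul, mul_assoc, hP, hQ, hP', hQ']
  noncomm_ring [hP, hQ, hP', hQ']

lemma kn_aux3 {P Q : R} (hP : P*P = P) (hQ : Q*Q = Q) :
    (P*Q + (1-P)*(1-Q)) * Q = P * (P*Q + (1-P)*(1-Q)) := by
  have hP' : ∀ x : R, P*(P*x) = P*x := fun x => by rw [← mul_assoc, hP]
  have hQ' : ∀ x : R, Q*(Q*x) = Q*x := fun x => by rw [← mul_assoc, hQ]
  simp only [mul_sub, sub_mul, mul_add, add_mul, mul_one, one_mul, mul_assoc, hP, hQ, hP', hQ']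
  noncomm_ring [hP, hQ, hP', hQ']

lemma kn_aux4 {P Q : R} (hP : P*P = P) (hQ : Q*Q = Q) :
    P * (1 - (P-Q)^2) = (1 - (P-Q)^2) * P := by
  have hP' : ∀ x : R, P*(P*x) = P*x := fun x => by rw [← mul_assoc, hP]
  have hQ' : ∀ x : R, Q*(Q*x) = Q*x := fun x => by rw [← mul_assoc, hQ]
  simp only [mul_sub, sub_mul, mul_add, add_mul, mul_one, one_mul, mul_assoc, hP, hQ, hP', hQ']
  noncomm_ring [hP, hQ, hP', hQ']

lemma kn_aux5 {P Q : R} (hP : P*P = P) (hQ : Q*Q = Q) :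
    (P*Q + (1-P)*(1-Q)) * (1 - (P-Q)^2) = (1 - (P-Q)^2) * (P*Q + (1-P)*(1-Q)) := by
  have hP' : ∀ x : R, P*(P*x) = P*x := fun x => by rw [← mul_assoc, hP]
  have hQ' : ∀ x : R, Q*(Q*x) = Q*x := fun x => by rw [← mul_assoc, hQ]
  simp only [mul_sub, sub_mul, mul_add, add_mul, mul_one, one_mul, mul_assoc, hP, hQ, hP', hQ']
  noncomm_ring [hP, hQ, hP', hQ']

lemma kn_aux6 {P : R} (hP : P*P = P) : (P + P - 1) * (P + P - 1) = 1 := by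
  simp only [mul_sub, sub_mul, mul_add, add_mul, mul_one, one_mul, hP]
  noncomm_ring

lemma kn_comm_inv {a b u : R} (h1 : b*a = 1) (h2 : a*b = 1) (hu : u*a = a*u) :
    u*b = b*u := by
  calc u*b = ((b*a)*u)*b := by rw [h1, one_mul]
  _ = b*((a*u)*b) := by noncomm_ring
  _ = b*((u*a)*b) := by rw [hu]
  _ = (b*u)*(a*b) := by noncomm_ring
  _ = b*u := by rw [h2, mul_one]

end KNaux

/-- **Kato–Nagy.** If `P, Q` are orthogonal projections on a complex Hilbert space with
`‖P - Q‖ < 1`, then `W = (I - (P - Q)^2)^{-1/2} (PQ + (I-P)(I-Q))` is unitary and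
conjugates `Q` to `P` (for a unitary, `W⁻¹ = W*`). -/
theorem kato_nagy {H : Type*} [NormedAddCommGroup H] [InnerProductSpace ℂ H]
    [CompleteSpace H] (P Q : H →L[ℂ] H)
    (hPidem : IsIdempotentElem P) (hPsa : IsSelfAdjoint P)
    (hQidem : IsIdempotentElem Q) (hQsa : IsSelfAdjoint Q)
    (hPQ : ‖P - Q‖ < 1)
    (W : H →L[ℂ] H)
    (hW : W = Ring.inverse (CFC.sqrt (1 - (P - Q) ^ 2)) * (P * Q + (1 - P) * (1 - Q))) :
    W ∈ unitary (H →L[ℂ] H) ∧ W * Q * star W = P := by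
  have hP : P * P = P := hPidem
  have hQ : Q * Q = Q := hQidem
  set A : H →L[ℂ] H := 1 - (P - Q)^2 with hA
  set S : H →L[ℂ] H := CFC.sqrt A with hS
  set U : H →L[ℂ] H := P * Q + (1 - P) * (1 - Q) with hU
  clear_value A S U
  -- basic facts about A
  have hDsa : IsSelfAdjoint (P - Q) := hPsa.sub hQsa
  have hD2 : ‖(P - Q)^2‖ < 1 := by
    calc ‖(P-Q)^2‖ = ‖(P-Q)*(P-Q)‖ := by rw [sq]
    _ ≤ ‖P-Q‖*‖P-Q‖ := norm_mul_le _ _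
    _ < 1 := by nlinarith [norm_nonneg (P-Q)]
  have hD2nn : (0 : H →L[ℂ] H) ≤ (P - Q)^2 := by
    have h := star_mul_self_nonneg (P - Q)
    rw [hDsa.star_eq] at h
    rw [sq]; exact h
  have hAnn : (0 : H →L[ℂ] H) ≤ A := by
    rw [hA]
    exact sub_nonneg.mpr <| (CStarAlgebra.norm_le_one_iff_of_nonneg _ hD2nn).mp hD2.le
  have hAunit : IsUnit A := by
    rw [hA]; exact ⟨Units.oneSub _ hD2, rfl⟩
  -- the square root
  have hSS : S * S = A := by rw [hS]; exact CFC.sqrt_mul_sqrt_self A hAnn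
  have hSnn : (0 : H →L[ℂ] H) ≤ S := by rw [hS]; exact CFC.sqrt_nonneg A
  have hSsa : IsSelfAdjoint S := .of_nonneg hSnn
  have hSunit : IsUnit S := by
    obtain ⟨u, hu⟩ := hAunit
    have hcom : Commute S ↑u := by
      rw [hu, ← hSS]; exact (Commute.refl S).mul_right (Commute.refl S)
    have hcomu : Commute S ↑u⁻¹ := hcom.units_inv_right
    refine ⟨⟨S, S * ↑u⁻¹, ?_, ?_⟩, rfl⟩
    · rw [← mul_assoc, hSS, ← hu, u.mul_inv]
    · rw [mul_assoc, ← hcomu.eq, ← mul_assoc, hSS, ← hu, u.mul_inv]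
  set Ri : H →L[ℂ] H := Ring.inverse S with hRi
  have hRS : Ri * S = 1 := Ring.inverse_mul_cancel S hSunit
  have hSR : S * Ri = 1 := Ring.mul_inverse_cancel S hSunit
  have hRsa : IsSelfAdjoint Ri := by
    rw [hRi, IsSelfAdjoint, ← Ring.inverse_star, hSsa.star_eq]
  -- star of U
  have hUstar : star U = Q * P + (1 - Q) * (1 - P) := by
    rw [hU]
    simp [star_add, star_mul, star_sub, star_one, hPsa.star_eq, hQsa.star_eq]
  -- algebraic identities
  have hUU : star U * U = A := by
    rw [hUstar, hU, hA]; exact kn_aux1 hP hQ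
  have hUUs : U * star U = A := by
    rw [hUstar, hU, hA]; exact kn_aux2 hP hQ
  have hUQ : U * Q = P * U := by rw [hU]; exact kn_aux3 hP hQ
  have hPA : P * A = A * P := by rw [hA]; exact kn_aux4 hP hQ
  have hUA : U * A = A * U := by rw [hU, hA]; exact kn_aux5 hP hQ
  -- R*R is a two-sided inverse of A
  have hAB : A * (Ri * Ri) = 1 := by
    calc A * (Ri * Ri) = S * (S * Ri) * Ri := by rw [← hSS]; noncomm_ring
    _ = 1 := by rw [hSR, mul_one, hSR]
  have hBA : (Ri * Ri) * A = 1 := by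
    calc (Ri * Ri) * A = Ri * (Ri * S) * S := by rw [← hSS]; noncomm_ring
    _ = 1 := by rw [hRS, mul_one, hRS]
  have hUB : U * (Ri * Ri) = (Ri * Ri) * U := kn_comm_inv hBA hAB hUA
  -- commutation of P with S (via the symmetry V = 2P - 1)
  set V : H →L[ℂ] H := P + P - 1 with hV
  clear_value V
  have hVV : V * V = 1 := by rw [hV]; exact kn_aux6 hP
  have hVsa : IsSelfAdjoint V := by
    rw [hV]; exact (hPsa.add hPsa).sub (IsSelfAdjoint.one _)
  have hVA : V * A = A * V := by
    calc V * A = P * A + P * A - A := by rw [hV]; noncomm_ring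
    _ = A * P + A * P - A := by rw [hPA]
    _ = A * V := by rw [hV]; noncomm_ring
  have hVSVnn : (0 : H →L[ℂ] H) ≤ V * S * V := by
    have h := star_left_conjugate_nonneg hSnn V
    rwa [hVsa.star_eq] at h
  have hVSVsq : (V * S * V) * (V * S * V) = A := by
    calc (V * S * V) * (V * S * V) = V * (S * ((V * V) * S)) * V := by noncomm_ring
    _ = V * (S * S) * V := by rw [hVV, one_mul]
    _ = (A * V) * V := by rw [hSS, hVA]
    _ = A := by rw [mul_assoc, hVV, mul_one]
  have hSV : S = V * S * V := by
    have h := CFC.sqrt_unique hVSVsq hVSVnn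
    rw [← hS] at h
    exact h
  have hVScomm : V * S = S * V := by
    conv_lhs => rw [hSV]
    calc V * (V * S * V) = (V * V) * S * V := by noncomm_ring
    _ = S * V := by rw [hVV, one_mul]
  have hPS : P * S = S * P := by
    have h2 : P * S + P * S = S * P + S * P := by
      have h := hVScomm
      rw [hV] at h
      have h' : P * S + P * S - S = S * P + S * P - S := by
        calc P * S + P * S - S = (P + P - 1) * S := by noncomm_ring
        _ = S * (P + P - 1) := h
        _ = S * P + S * P - S := by noncomm_ring
      linear_combination (norm := module) h'
    have h3 : (2 : ℂ) • (P * S) = (2 : ℂ) • (S * P) := by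
      rw [two_smul, two_smul]; exact h2
    exact smul_right_injective (H →L[ℂ] H) (two_ne_zero) h3
  have hPR : P * Ri = Ri * P := kn_comm_inv hRS hSR hPS
  -- star of W
  have hWstar : star W = star U * Ri := by
    rw [hW, star_mul, hRsa.star_eq]
  -- unitarity
  have h1 : star W * W = 1 := by
    calc star W * W = star U * ((Ri * Ri) * U) := by rw [hWstar, hW]; noncomm_ring
    _ = star U * (U * (Ri * Ri)) := by rw [hUB]
    _ = A * (Ri * Ri) := by rw [← hUU]; noncomm_ring
    _ = 1 := hAB
  have h2 : W * star W = 1 := by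
    calc W * star W = Ri * (U * star U) * Ri := by rw [hWstar, hW]; noncomm_ring
    _ = Ri * (S * (S * Ri)) := by rw [hUUs, ← hSS]; noncomm_ring
    _ = 1 := by rw [hSR, mul_one, hRS]
  refine ⟨Unitary.mem_iff.mpr ⟨h1, h2⟩, ?_⟩
  calc W * Q * star W = Ri * ((U * Q) * star U) * Ri := by rw [hWstar, hW]; noncomm_ring
  _ = Ri * (P * (U * star U)) * Ri := by rw [hUQ]; noncomm_ring
  _ = (Ri * P) * A * Ri := by rw [hUUs]; noncomm_ring
  _ = P * (Ri * (S * (S * Ri))) := by rw [← hPR, ← hSS]; noncomm_ring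
  _ = P := by rw [hSR, mul_one, hRS, mul_one]
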